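/- In the Poisson tree model with λ = K²(p−q)²/((n−K)q), the exponential moments satisfy E[e^{2Z₁^{t+1}}] ≤ exp(C b_t) with C = λ(2 + p/q), E[e^{3Z₁^{t+1}}] ≤ exp(C' b_t) with C' = λ(3 + 2(p/q) + (p/q)²), and more generally for any integer h ≥ 2, E[e^{hZ₀^{t+1}}] = E[e^{(h−1)Z₁^{t+1}}] ≤ exp( λ b_t · Σ_{j=2}^h C(h,j)(p/q − 1)^{j−2} ). -/

import Mathlib

open MeasureTheory Real Finset

/-- Bounds on exponential moments of BP log likelihood ratios on the Poisson
tree. `Z₀^t`, `Z₁^t` are the conditional laws of the BP log likelihood ratio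
at the root (given root label 0 resp. 1), `b_t = E[e^{Z₁^t}/(1+e^{Z₁^t-ν})]`,
`ν = log((n-K)/K)`, `λ = K²(p-q)²/((n-K)q)`. The model enters through the
change-of-measure hypothesis `hchg` and the exact exponential-moment identity
`hexact` coming from the Poisson offspring structure. Conclusions:
`E[e^{2Z₁^{t+1}}] ≤ exp(C b_t)` with `C = λ(2+p/q)`,
`E[e^{3Z₁^{t+1}}] ≤ exp(C' b_t)` with `C' = λ(3+2(p/q)+(p/q)²)`, and for any
integer `h ≥ 2`,
`E[e^{hZ₀^{t+1}}] = E[e^{(h-1)Z₁^{t+1}}] ≤ exp(λ b_t Σ_{j=2}^h C(h,j)(p/q-1)^{j-2})`. -/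
theorem stmt_18 {Ω : Type*} [MeasurableSpace Ω] (μ : Measure Ω)
    [IsProbabilityMeasure μ]
    (K n p q : ℝ) (h0q : 0 < q) (hqp : q ≤ p) (hp1 : p ≤ 1)
    (hK : 1 ≤ K) (hKn : K < n)
    (ν lam : ℝ) (hν : ν = Real.log ((n - K) / K))
    (hlam : lam = K ^ 2 * (p - q) ^ 2 / ((n - K) * q))
    (Z₀ Z₁ : ℕ → Ω → ℝ)
    (hZ₀ : ∀ t, Measurable (Z₀ t)) (hZ₁ : ∀ t, Measurable (Z₁ t))
    (hchg : ∀ (t : ℕ) (f : ℝ → ENNReal), Measurable f →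
      (∫⁻ ω, f (Z₀ t ω) ∂μ)
        = ∫⁻ ω, f (Z₁ t ω) * ENNReal.ofReal (Real.exp (-(Z₁ t ω))) ∂μ)
    (hexact : ∀ (t : ℕ) (h : ℕ), 2 ≤ h →
      (∫⁻ ω, ENNReal.ofReal (Real.exp ((h : ℝ) * Z₀ (t + 1) ω)) ∂μ)
        = ENNReal.ofReal (Real.exp (K * (p - q) *
            ∑ j ∈ Finset.Icc 2 h, (h.choose j : ℝ) * (lam / (K * (p - q))) ^ (j - 1)
              * ∫ ω, (Real.exp (Z₁ t ω) / (1 + Real.exp (Z₁ t ω - ν))) ^ (j - 1) ∂μ)))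
    (t : ℕ) (b : ℝ)
    (hb : b = ∫ ω, Real.exp (Z₁ t ω) / (1 + Real.exp (Z₁ t ω - ν)) ∂μ) :
    (∫⁻ ω, ENNReal.ofReal (Real.exp (2 * Z₁ (t + 1) ω)) ∂μ)
      ≤ ENNReal.ofReal (Real.exp (lam * (2 + p / q) * b)) ∧
    (∫⁻ ω, ENNReal.ofReal (Real.exp (3 * Z₁ (t + 1) ω)) ∂μ)
      ≤ ENNReal.ofReal (Real.exp (lam * (3 + 2 * (p / q) + (p / q) ^ 2) * b)) ∧
    (∀ h : ℕ, 2 ≤ h →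
      (∫⁻ ω, ENNReal.ofReal (Real.exp ((h : ℝ) * Z₀ (t + 1) ω)) ∂μ)
        = (∫⁻ ω, ENNReal.ofReal (Real.exp (((h : ℝ) - 1) * Z₁ (t + 1) ω)) ∂μ) ∧
      (∫⁻ ω, ENNReal.ofReal (Real.exp ((h : ℝ) * Z₀ (t + 1) ω)) ∂μ)
        ≤ ENNReal.ofReal (Real.exp (lam * b *
            ∑ j ∈ Finset.Icc 2 h, (h.choose j : ℝ) * (p / q - 1) ^ (j - 2)))) := by
  have hK0 : (0:ℝ) < K := lt_of_lt_of_le one_pos hK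
  have hnK : (0:ℝ) < n - K := sub_pos.mpr hKn
  have hexpν : Real.exp ν = (n - K) / K := by
    rw [hν, Real.exp_log (by positivity)]
  have hlam0 : 0 ≤ lam := by rw [hlam]; positivity
  -- change of measure
  have hEq : ∀ (s : ℕ) (c : ℝ),
      (∫⁻ ω, ENNReal.ofReal (Real.exp (c * Z₀ s ω)) ∂μ)
        = ∫⁻ ω, ENNReal.ofReal (Real.exp ((c - 1) * Z₁ s ω)) ∂μ := by
    intro s c
    have hm : Measurable (fun x : ℝ => ENNReal.ofReal (Real.exp (c * x))) :=
      (measurable_id.const_mul c).exp.ennreal_ofReal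
    rw [hchg s _ hm]
    congr 1; funext ω
    rw [← ENNReal.ofReal_mul (Real.exp_nonneg _), ← Real.exp_add]
    ring_nf
  set g : Ω → ℝ := fun ω => Real.exp (Z₁ t ω) / (1 + Real.exp (Z₁ t ω - ν)) with hgdef
  have hgnn : ∀ ω, 0 ≤ g ω := fun ω => by
    have h1 := Real.exp_pos (Z₁ t ω); have h2 := Real.exp_pos (Z₁ t ω - ν)
    simp only [hgdef]; positivity
  have hgle : ∀ ω, g ω ≤ Real.exp ν := fun ω => by
    simp only [hgdef]
    have hd : (0:ℝ) < 1 + Real.exp (Z₁ t ω - ν) := by positivity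
    rw [div_le_iff₀ hd]
    have hh : Real.exp ν * (1 + Real.exp (Z₁ t ω - ν)) = Real.exp ν + Real.exp (Z₁ t ω) := by
      rw [mul_add, mul_one, ← Real.exp_add]; ring_nf
    rw [hh]
    nlinarith [Real.exp_pos ν]
  have hgm : Measurable g := by
    apply Measurable.div ((hZ₁ t).exp)
    exact (measurable_const.add ((hZ₁ t).sub measurable_const).exp)
  have hgim : ∀ m : ℕ, Integrable (fun ω => g ω ^ m) μ := by
    intro m
    apply Integrable.mono' (integrable_const ((Real.exp ν) ^ m))
      ((hgm.pow_const m).aestronglyMeasurable)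
    filter_upwards with ω
    rw [Real.norm_eq_abs, abs_of_nonneg (pow_nonneg (hgnn ω) m)]
    exact pow_le_pow_left₀ (hgnn ω) (hgle ω) m
  have hgi : Integrable g μ := by simpa using hgim 1
  have hbi : b = ∫ ω, g ω ∂μ := hb
  have hb0 : 0 ≤ b := by rw [hbi]; exact integral_nonneg (fun ω => hgnn ω)
  have hIm : ∀ m : ℕ, (∫ ω, g ω ^ (m + 1) ∂μ) ≤ (Real.exp ν) ^ m * b := by
    intro m
    have h1 : (∫ ω, g ω ^ (m + 1) ∂μ) ≤ ∫ ω, (Real.exp ν) ^ m * g ω ∂μ := by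
      apply integral_mono (hgim (m + 1)) (hgi.const_mul _)
      intro ω
      calc g ω ^ (m + 1) = g ω ^ m * g ω := by ring
        _ ≤ (Real.exp ν) ^ m * g ω :=
          mul_le_mul_of_nonneg_right (pow_le_pow_left₀ (hgnn ω) (hgle ω) m) (hgnn ω)
    rw [MeasureTheory.integral_const_mul, ← hbi] at h1
    exact h1
  have main : ∀ h : ℕ, 2 ≤ h →
      (∫⁻ ω, ENNReal.ofReal (Real.exp ((h : ℝ) * Z₀ (t + 1) ω)) ∂μ)
        ≤ ENNReal.ofReal (Real.exp (lam * b *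
            ∑ j ∈ Finset.Icc 2 h, (h.choose j : ℝ) * (p / q - 1) ^ (j - 2))) := by
    intro h hh
    rw [hexact t h hh]
    apply ENNReal.ofReal_le_ofReal
    apply Real.exp_le_exp.mpr
    by_cases hpq : p = q
    · have hl0 : lam = 0 := by rw [hlam, hpq]; simp
      rw [hpq, hl0]; simp
    · have hqpl : q < p := lt_of_le_of_ne hqp (Ne.symm hpq)
      have hpq0 : (0:ℝ) < p - q := sub_pos.mpr hqpl
      rw [Finset.mul_sum, Finset.mul_sum]
      apply Finset.sum_le_sum
      intro j hj
      have hj2 : 2 ≤ j := (Finset.mem_Icc.mp hj).1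
      obtain ⟨m, rfl⟩ : ∃ m, j = m + 2 := ⟨j - 2, by omega⟩
      have e1 : m + 2 - 1 = m + 1 := by omega
      have e2 : m + 2 - 2 = m := by omega
      rw [e1, e2]
      calc K * (p - q) * ((h.choose (m + 2) : ℝ) * (lam / (K * (p - q))) ^ (m + 1)
              * ∫ ω, g ω ^ (m + 1) ∂μ)
          ≤ K * (p - q) * ((h.choose (m + 2) : ℝ) * (lam / (K * (p - q))) ^ (m + 1)
              * ((Real.exp ν) ^ m * b)) := by
            refine mul_le_mul_of_nonneg_left ?_ (by positivity : (0:ℝ) ≤ K * (p - q))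
            exact mul_le_mul_of_nonneg_left (hIm m) (by positivity)
        _ = lam * b * ((h.choose (m + 2) : ℝ) * (p / q - 1) ^ m) := by
            have h2 : p / q - 1 = (p - q) / q := by field_simp
            have hr : lam / (K * (p - q)) = K * (p - q) / ((n - K) * q) := by
              rw [hlam]; field_simp [hK0.ne', hnK.ne', h0q.ne', hpq0.ne']
            have hmul : (K * (p - q) / ((n - K) * q)) * ((n - K) / K) = (p - q) / q := by
              field_simp [hK0.ne', hnK.ne', h0q.ne']
            have hKr : K * (p - q) * (K * (p - q) / ((n - K) * q)) = lam := by
              rw [hlam]; field_simp [hnK.ne', h0q.ne']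
            rw [hexpν, hr, h2]
            calc K * (p - q) * ((h.choose (m + 2) : ℝ)
                    * (K * (p - q) / ((n - K) * q)) ^ (m + 1) * (((n - K) / K) ^ m * b))
                = (K * (p - q) * (K * (p - q) / ((n - K) * q))) * b
                    * ((h.choose (m + 2) : ℝ))
                    * ((K * (p - q) / ((n - K) * q)) * ((n - K) / K)) ^ m := by
                  rw [pow_succ, mul_pow]; ring
              _ = lam * b * ((h.choose (m + 2) : ℝ) * ((p - q) / q) ^ m) := by
                  rw [hmul, hKr]; ring
  refine ⟨?_, ?_, ?_⟩
  · have h3 := main 3 (by norm_num)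
    have he := hEq (t + 1) 3
    norm_num at he h3
    rw [← he]
    refine le_trans h3 (le_of_eq ?_)
    congr 1
    congr 1
    rw [show Finset.Icc 2 3 = {2, 3} from rfl]
    rw [Finset.sum_pair (by norm_num : (2:ℕ) ≠ 3)]
    norm_num
    ring
  · have h4 := main 4 (by norm_num)
    have he := hEq (t + 1) 4
    norm_num at he h4
    rw [← he]
    refine le_trans h4 (le_of_eq ?_)
    congr 1
    congr 1
    rw [show Finset.Icc 2 4 = {2, 3, 4} from rfl]
    rw [Finset.sum_insert (by norm_num), Finset.sum_pair (by norm_num : (3:ℕ) ≠ 4)]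
    norm_num [Nat.choose]
    ring
  · intro h hh
    exact ⟨hEq (t + 1) (h : ℝ), main h hh⟩
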